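/- For every t with 0 < t < 1/√2, the vector x := (1/√(1/t² - 2)) · (1/t, 0, 0, 0, -√2) ∈ ℝ^{1,4} satisfies ⟨x, x⟩ = -1, x 0 > 0, and ⟨x, P t ε⟩ = 0 for every sign vector ε with ε 0 · ε 1 · ε 2 = -1. (Hence x is a point of H⁴ lying on all four odd positive hyperplanes: for t < 1/√2 these four walls of the deformed polytope meet at a common finite vertex, so the corresponding end of the polytope has closed up and the polytope has finite volume.) -/

import Mathlib

/-- The Minkowski inner product on `ℝ^{1,4}`, identified with `Fin 5 → ℝ`. -/
noncomputable def mink (v w : Fin 5 → ℝ) : ℝ :=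
  -(v 0 * w 0) + v 1 * w 1 + v 2 * w 2 + v 3 * w 3 + v 4 * w 4

/-- The positive octet space-like vectors of the deformed 24-cell (Table 6.1). -/
noncomputable def Pvec (t : ℝ) (ε : Fin 3 → ℝ) : Fin 5 → ℝ :=
  ![Real.sqrt 2, ε 0, ε 1, ε 2, (ε 0 * ε 1 * ε 2) / t]

/-- The negative octet space-like vectors of the deformed 24-cell (Table 6.1). -/
noncomputable def Nvec (t : ℝ) (ε : Fin 3 → ℝ) : Fin 5 → ℝ :=
  ![Real.sqrt 2, ε 0, ε 1, ε 2, -((ε 0 * ε 1 * ε 2) * t)]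

/-- For `0 < t < 1/√2` the four odd positive walls of the deformed polytope meet at a
common finite vertex of `H⁴`: the normalized vector `x` lies in hyperbolic space and on
all four hyperplanes, so the corresponding end has closed up and the polytope has finite
volume. -/
theorem odd_positive_walls_meet_at_finite_vertex (t : ℝ) (ht0 : 0 < t)
    (ht : t < 1 / Real.sqrt 2) :
    let x : Fin 5 → ℝ :=
      (1 / Real.sqrt (1 / t ^ 2 - 2)) • (![1 / t, 0, 0, 0, -Real.sqrt 2] : Fin 5 → ℝ)
    mink x x = -1 ∧ 0 < x 0 ∧
    ∀ ε : Fin 3 → ℝ, (∀ i, ε i = -1 ∨ ε i = 1) → ε 0 * ε 1 * ε 2 = -1 →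
      mink x (Pvec t ε) = 0 := by
  intro x
  have hs2 : Real.sqrt 2 > 0 := by positivity
  have hd : 0 < 1 / t ^ 2 - 2 := by
    have h1 : t * Real.sqrt 2 < 1 := (lt_div_iff₀ hs2).mp ht
    have ht2 : t ^ 2 < 1 / 2 := by
      nlinarith [Real.sq_sqrt (by norm_num : (2:ℝ) ≥ 0), sq_nonneg (t * Real.sqrt 2)]
    rw [sub_pos, lt_div_iff₀ (by positivity)]
    linarith
  have hsq : Real.sqrt (1 / t ^ 2 - 2) > 0 := Real.sqrt_pos.mpr hd
  have hsqsq : Real.sqrt (1 / t ^ 2 - 2) ^ 2 = 1 / t ^ 2 - 2 := Real.sq_sqrt hd.le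
  have h2 : Real.sqrt 2 ^ 2 = 2 := Real.sq_sqrt (by norm_num)
  have hx : ∀ i, x i = (1 / Real.sqrt (1 / t ^ 2 - 2)) *
      (![1 / t, 0, 0, 0, -Real.sqrt 2] : Fin 5 → ℝ) i := fun i => rfl
  have v2 : (![1 / t, 0, 0, 0, -Real.sqrt 2] : Fin 5 → ℝ) 2 = 0 := rfl
  have v3 : (![1 / t, 0, 0, 0, -Real.sqrt 2] : Fin 5 → ℝ) 3 = 0 := rfl
  have v4 : (![1 / t, 0, 0, 0, -Real.sqrt 2] : Fin 5 → ℝ) 4 = -Real.sqrt 2 := rfl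
  refine ⟨?_, ?_, ?_⟩
  · simp only [mink, hx]
    simp only [Matrix.cons_val_zero, Matrix.cons_val_one, Matrix.head_cons, v2, v3, v4]
    have key : (1 / Real.sqrt (1 / t ^ 2 - 2)) ^ 2 = 1 / (1 / t ^ 2 - 2) := by
      rw [div_pow, one_pow, hsqsq]
    have ht' : t ≠ 0 := ht0.ne'
    have hne : (1 / t ^ 2 - 2) ≠ 0 := hd.ne'
    have expand : -(1 / Real.sqrt (1 / t ^ 2 - 2) * (1 / t) *
          (1 / Real.sqrt (1 / t ^ 2 - 2) * (1 / t))) +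
        1 / Real.sqrt (1 / t ^ 2 - 2) * 0 * (1 / Real.sqrt (1 / t ^ 2 - 2) * 0) +
        1 / Real.sqrt (1 / t ^ 2 - 2) * 0 * (1 / Real.sqrt (1 / t ^ 2 - 2) * 0) +
        1 / Real.sqrt (1 / t ^ 2 - 2) * 0 * (1 / Real.sqrt (1 / t ^ 2 - 2) * 0) +
        1 / Real.sqrt (1 / t ^ 2 - 2) * -Real.sqrt 2 *
          (1 / Real.sqrt (1 / t ^ 2 - 2) * -Real.sqrt 2)
        = (1 / Real.sqrt (1 / t ^ 2 - 2)) ^ 2 * (-(1 / t) ^ 2 + Real.sqrt 2 ^ 2) := by ring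
    rw [expand, key, h2, show -(1 / t) ^ 2 + 2 = -(1 / t ^ 2 - 2) from by ring,
      one_div, inv_mul_eq_div, div_eq_iff hne]
    ring
  · have : x 0 = (1 / Real.sqrt (1 / t ^ 2 - 2)) * (1 / t) := rfl
    rw [this]; positivity
  · intro ε _ hprod
    simp only [mink, hx, Pvec]
    have p4 : (![Real.sqrt 2, ε 0, ε 1, ε 2, (ε 0 * ε 1 * ε 2) / t] : Fin 5 → ℝ) 4
        = (ε 0 * ε 1 * ε 2) / t := rfl
    have p2 : (![Real.sqrt 2, ε 0, ε 1, ε 2, (ε 0 * ε 1 * ε 2) / t] : Fin 5 → ℝ) 2 = ε 1 := rfl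
    have p3 : (![Real.sqrt 2, ε 0, ε 1, ε 2, (ε 0 * ε 1 * ε 2) / t] : Fin 5 → ℝ) 3 = ε 2 := rfl
    simp only [Matrix.cons_val_zero, Matrix.cons_val_one, Matrix.head_cons, v2, v3, v4, p2, p3, p4]
    rw [hprod]
    field_simp
    ring
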